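/- arXiv:1308.5895 — 5 statements merged into one kernel-verified Lean document; each statement's English description precedes it below -/
import Mathlib

section
/- If f is a rational map of degree d ≥ 2 all of whose critical points are fixed points, and all fixed points of f are simple (so that the holomorphic fixed-point formula Σ_{z ∈ Fix(f)} 1/(1 - f'(z)) = 1 holds), then the number of distinct critical points of f is at most d. -/
open scoped BigOperators

/-- If `f` is a rational map of degree `d ≥ 2` all of whose critical points are fixed,
and all fixed points of `f` are simple — so that `f` has exactly `d + 1` distinct fixed
points `Fix`, with multipliers `μ z ≠ 1`, satisfying the holomorphic fixed-point formula
`∑_{z ∈ Fix} 1/(1 - μ z) = 1` — then the number of distinct critical points of `f`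
(a set `C ⊆ Fix` of fixed points with multiplier `0`) is at most `d`. -/
theorem card_fixed_critical_points_le_degree
    (d : ℕ) (hd : 2 ≤ d) (Fix : Finset ℂ) (μ : ℂ → ℂ)
    (hcard : Fix.card = d + 1)
    (hsimple : ∀ z ∈ Fix, μ z ≠ 1)
    (hformula : ∑ z ∈ Fix, (1 - μ z)⁻¹ = 1)
    (C : Finset ℂ) (hCFix : C ⊆ Fix)
    (hcrit : ∀ z ∈ C, μ z = 0) :
    C.card ≤ d := by
  by_contra h
  push_neg at h
  have hle : Fix.card ≤ C.card := by omega
  have hCeq : C = Fix := Finset.eq_of_subset_of_card_le hCFix hle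
  subst hCeq
  have : ∑ z ∈ C, (1 - μ z)⁻¹ = (C.card : ℂ) := by
    rw [show ((C.card : ℂ)) = ∑ _z ∈ C, (1:ℂ) by simp]
    exact Finset.sum_congr rfl fun z hz => by simp [hcrit z hz]
  rw [this, hcard] at hformula
  have hd0 : (d : ℂ) = 0 := by push_cast at hformula; linear_combination hformula
  have : d = 0 := Nat.cast_eq_zero.mp hd0
  omega
end

section
/- Fix d ≥ 3. Every partition 2d - 2 = m₁ + … + m_n with n ≤ d and 1 ≤ m_i ≤ d - 1 for each i arises as the degree sequence of a connected loopless multigraph on n vertices (i.e., there is a connected multigraph without loops whose i-th vertex has degree m_i). -/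
open scoped BigOperators

/-- A loopless multigraph on `Fin n` is encoded by a symmetric edge-multiplicity
function `w` vanishing on the diagonal. -/
def IsMultigraph {n : ℕ} (w : Fin n → Fin n → ℕ) : Prop :=
  (∀ i j, w i j = w j i) ∧ (∀ i, w i i = 0)

/-- The degree of vertex `i` in the multigraph `w` (edge-endpoints counted with
multiplicity). -/
def mdeg {n : ℕ} (w : Fin n → Fin n → ℕ) (i : Fin n) : ℕ := ∑ j, w i j

/-- The underlying simple graph of a multigraph `w`. -/
def mSimple {n : ℕ} (w : Fin n → Fin n → ℕ) : SimpleGraph (Fin n) :=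
  SimpleGraph.fromRel (fun i j => 0 < w i j)

lemma pair_le {n : ℕ} (m : Fin n → ℕ) {i j : Fin n} (h : i ≠ j) :
    m i + m j ≤ ∑ x, m x := by
  calc m i + m j = ∑ x ∈ ({i, j} : Finset (Fin n)), m x := by
        rw [Finset.sum_insert (by simp [h]), Finset.sum_singleton]
    _ ≤ _ := Finset.sum_le_sum_of_subset (Finset.subset_univ _)

lemma triple_le {n : ℕ} (m : Fin n → ℕ) {i j k : Fin n} (hij : i ≠ j) (hik : i ≠ k)
    (hjk : j ≠ k) : m i + m j + m k ≤ ∑ x, m x := by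
  calc m i + m j + m k = ∑ x ∈ ({i, j, k} : Finset (Fin n)), m x := by
        rw [Finset.sum_insert (by simp [hij, hik]), Finset.sum_insert (by simp [hjk]),
          Finset.sum_singleton]; ring
    _ ≤ _ := Finset.sum_le_sum_of_subset (Finset.subset_univ _)

lemma realize_perm {n : ℕ} (e : Fin n ≃ Fin n) (m : Fin n → ℕ)
    (h : ∃ w : Fin n → Fin n → ℕ, IsMultigraph w ∧ (∀ i, mdeg w i = m (e i)) ∧ (mSimple w).Connected) :
    ∃ w : Fin n → Fin n → ℕ, IsMultigraph w ∧ (∀ i, mdeg w i = m i) ∧ (mSimple w).Connected := by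
  obtain ⟨w, ⟨hsym, hdiag⟩, hdeg, hconn⟩ := h
  refine ⟨fun i j => w (e.symm i) (e.symm j), ⟨fun i j => hsym _ _, fun i => hdiag _⟩, ?_, ?_⟩
  · intro i
    have h2 : mdeg (fun i j => w (e.symm i) (e.symm j)) i = mdeg w (e.symm i) :=
      Fintype.sum_equiv e.symm _ _ (fun x => rfl)
    rw [h2, hdeg, e.apply_symm_apply]
  · have hmap : ∀ a b, (mSimple w).Adj a b →
        (mSimple (fun i j => w (e.symm i) (e.symm j))).Adj (e a) (e b) := by
      intro a b hab
      rw [mSimple, SimpleGraph.fromRel_adj] at hab ⊢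
      exact ⟨fun hc => hab.1 (e.injective hc), by simpa using hab.2⟩
    have : Nonempty (Fin n) := hconn.nonempty
    refine ⟨fun x y => ?_⟩
    let f : mSimple w →g mSimple (fun i j => w (e.symm i) (e.symm j)) :=
      ⟨⇑e, fun {a b} h => hmap a b h⟩
    have h5 := (hconn.preconnected (e.symm x) (e.symm y)).map f
    have hfz : ∀ z, f z = e z := fun z => rfl
    rw [hfz, hfz, e.apply_symm_apply, e.apply_symm_apply] at h5
    exact h5

lemma realize_addEdge {n : ℕ} (m : Fin n → ℕ) {i j : Fin n} (hij : i ≠ j)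
    (h : ∃ w : Fin n → Fin n → ℕ, IsMultigraph w ∧ (∀ x, mdeg w x = m x) ∧ (mSimple w).Connected) :
    ∃ w : Fin n → Fin n → ℕ, IsMultigraph w ∧
      (∀ x, mdeg w x = m x + ((if x = i then 1 else 0) + (if x = j then 1 else 0))) ∧
      (mSimple w).Connected := by
  obtain ⟨w, ⟨hsym, hdiag⟩, hdeg, hconn⟩ := h
  refine ⟨fun a b => w a b +
      ((if a = i ∧ b = j then 1 else 0) + (if a = j ∧ b = i then 1 else 0)), ?_, ?_, ?_⟩
  · constructor
    · intro a b
      have := hsym a b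
      by_cases h1 : a = i ∧ b = j <;> by_cases h2 : a = j ∧ b = i <;>
        simp_all [and_comm] <;> omega
    · intro a
      have h1 : ¬ (a = i ∧ a = j) := fun ⟨h1, h2⟩ => hij (h1 ▸ h2 ▸ rfl)
      have h2 : ¬ (a = j ∧ a = i) := fun ⟨h1, h2⟩ => hij (h2 ▸ h1 ▸ rfl)
      simp [hdiag a, h1, h2]
  · intro x
    unfold mdeg
    rw [Finset.sum_add_distrib, Finset.sum_add_distrib]
    have e1 : ∑ b, (if x = i ∧ b = j then 1 else 0) = if x = i then 1 else 0 := by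
      by_cases hx : x = i
      · simp [hx]
      · simp [hx]
    have e2 : ∑ b, (if x = j ∧ b = i then 1 else 0) = if x = j then 1 else 0 := by
      by_cases hx : x = j
      · simp [hx]
      · simp [hx]
    rw [e1, e2, ← hdeg x]
    rfl
  · refine hconn.mono ?_
    intro a b hab
    rw [mSimple, SimpleGraph.fromRel_adj] at hab ⊢
    refine ⟨hab.1, ?_⟩
    rcases hab.2 with h | h
    · exact Or.inl (by positivity)
    · exact Or.inr (by positivity)

lemma realize_addLeaf {n : ℕ} (m' : Fin (n + 1) → ℕ) (j : Fin (n + 1))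
    (h : ∃ w : Fin (n+1) → Fin (n+1) → ℕ, IsMultigraph w ∧ (∀ x, mdeg w x = m' x) ∧
      (mSimple w).Connected) :
    ∃ w : Fin (n + 2) → Fin (n + 2) → ℕ, IsMultigraph w ∧
      (mdeg w 0 = 1 ∧ ∀ x : Fin (n + 1), mdeg w x.succ = m' x + (if x = j then 1 else 0)) ∧
      (mSimple w).Connected := by
  obtain ⟨w0, ⟨hsym, hdiag⟩, hdeg, hconn⟩ := h
  set w : Fin (n + 2) → Fin (n + 2) → ℕ := fun a b =>
    Fin.cases (Fin.cases 0 (fun b' => if b' = j then 1 else 0) b)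
      (fun a' => Fin.cases (if a' = j then 1 else 0) (fun b' => w0 a' b') b) a with hw
  have hw00 : w 0 0 = 0 := rfl
  have hw0s : ∀ b', w 0 b'.succ = if b' = j then 1 else 0 := fun b' => by simp [hw]
  have hws0 : ∀ a', w a'.succ 0 = if a' = j then 1 else 0 := fun a' => by simp [hw]
  have hwss : ∀ a' b', w a'.succ b'.succ = w0 a' b' := fun a' b' => by simp [hw]
  refine ⟨w, ⟨?_, ?_⟩, ⟨?_, ?_⟩, ?_⟩
  · intro a b
    induction a using Fin.cases <;> induction b using Fin.cases <;>
      simp [hw0s, hws0, hwss, hsym]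
  · intro a
    induction a using Fin.cases
    · rfl
    · simp [hwss, hdiag]
  · unfold mdeg
    rw [Fin.sum_univ_succ, hw00]
    simp [hw0s]
  · intro x
    unfold mdeg
    rw [Fin.sum_univ_succ, hws0]
    have : ∑ b' : Fin (n+1), w x.succ b'.succ = m' x := by
      rw [← hdeg x]; unfold mdeg; exact Finset.sum_congr rfl (fun b _ => hwss x b)
    rw [this]; omega
  · have hadj : (mSimple w).Adj 0 j.succ := by
      rw [mSimple, SimpleGraph.fromRel_adj]
      exact ⟨(Fin.succ_ne_zero j).symm, Or.inl (by rw [hw0s]; simp)⟩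
    let f : mSimple w0 →g mSimple w := by
      refine ⟨Fin.succ, fun {a b} hab => ?_⟩
      rw [mSimple, SimpleGraph.fromRel_adj] at hab ⊢
      refine ⟨fun hc => hab.1 ((Fin.succ_injective _) hc), ?_⟩
      rw [hwss, hwss]
      exact hab.2
    have hfz : ∀ z, f z = Fin.succ z := fun z => rfl
    have key : ∀ x : Fin (n + 2), (mSimple w).Reachable x 0 := by
      intro x
      induction x using Fin.cases with
      | zero => exact SimpleGraph.Reachable.refl 0
      | succ a =>
        have h1 := (hconn.preconnected a j).map f
        rw [hfz, hfz] at h1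
        exact h1.trans (hadj.symm.reachable)
    exact ⟨fun x y => (key x).trans (key y).symm⟩

lemma main_lemma : ∀ N k E : ℕ, k + E ≤ N → ∀ m : Fin (k + 2) → ℕ,
    (∀ i, 1 ≤ m i) → (∀ i, m i ≤ E) → (∑ i, m i = 2 * E) → k + 2 ≤ E + 1 →
    ∃ w : Fin (k + 2) → Fin (k + 2) → ℕ,
      IsMultigraph w ∧ (∀ i, mdeg w i = m i) ∧ (mSimple w).Connected := by
  intro N
  induction N with
  | zero =>
    intro k E hN m h1 hle hsum hE
    have := h1 0; have := hle 0; omega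
  | succ N ih =>
    intro k E hN m h1 hle hsum hE
    have hE1 : 1 ≤ E := le_trans (h1 0) (hle 0)
    cases k with
    | zero =>
      -- base case: two vertices
      have hs2 : m 0 + m 1 = 2 * E := by rw [← hsum, Fin.sum_univ_two]
      have hm0 : m 0 = E := by have := hle 0; have := hle 1; omega
      have hm1 : m 1 = E := by have := hle 0; have := hle 1; omega
      refine ⟨fun a b => if a = b then 0 else E, ⟨?_, ?_⟩, ?_, ?_⟩
      · intro a b; by_cases h : a = b <;> simp [h, Ne.symm, eq_comm]
      · intro a; simp
      · intro x
        unfold mdeg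
        rw [Fin.sum_univ_two]
        fin_cases x <;> simp <;> omega
      · refine ⟨fun x y => ?_⟩
        by_cases hxy : x = y
        · exact hxy ▸ SimpleGraph.Reachable.refl x
        · refine SimpleGraph.Adj.reachable ?_
          rw [mSimple, SimpleGraph.fromRel_adj]
          exact ⟨hxy, Or.inl (by simp [hxy]; omega)⟩
    | succ k' =>
      by_cases hleaf : ∃ i, m i = 1
      · -- Branch B : remove a leaf
        obtain ⟨i0, hi0⟩ := hleaf
        have hEk : k' + 2 ≤ E := by omega
        set e := Equiv.swap (0 : Fin (k' + 3)) i0 with he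
        apply realize_perm e
        have hm20 : m (e 0) = 1 := by rw [he]; simp [Equiv.swap_apply_left, hi0]
        have hsum2 : ∑ x, m (e x) = 2 * E := by rw [← hsum]; exact Equiv.sum_comp e m
        obtain ⟨j₀, -, hj₀⟩ := Finset.exists_max_image Finset.univ
          (fun b : Fin (k' + 2) => m (e b.succ)) ⟨0, Finset.mem_univ 0⟩
        simp only [Finset.mem_univ, forall_true_left, true_implies] at hj₀
        have h3 : ∑ x : Fin (k' + 3), m (e x) = m (e 0) + ∑ b : Fin (k' + 2), m (e b.succ) :=
          Fin.sum_univ_succ _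
        have hsumsucc : ∑ b : Fin (k' + 2), m (e b.succ) = 2 * E - 1 := by omega
        have hj₀2 : 2 ≤ m (e j₀.succ) := by
          by_contra hc
          push_neg at hc
          have hub : ∑ b : Fin (k' + 2), m (e b.succ) ≤ (k' + 2) * 1 := by
            have := Finset.sum_le_card_nsmul Finset.univ (fun b : Fin (k' + 2) => m (e b.succ)) 1
              (fun b _ => le_trans (hj₀ b) (by omega))
            simpa using this
          omega
        have hother : ∀ b : Fin (k' + 2), b ≠ j₀ → m (e b.succ) ≤ E - 1 := by
          intro b hb
          by_contra hc
          push_neg at hc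
          have hbE : m (e b.succ) = E := by have := hle (e b.succ); omega
          have hjE : m (e j₀.succ) = E := le_antisymm (hle _) (hbE ▸ hj₀ b)
          have htr := triple_le (fun x => m (e x)) (i := 0) (j := b.succ) (k := j₀.succ)
            (Ne.symm (Fin.succ_ne_zero b)) (Ne.symm (Fin.succ_ne_zero j₀))
            (fun hcc => hb (Fin.succ_injective _ hcc))
          omega
        obtain ⟨E', rfl⟩ : ∃ E', E = E' + 1 := ⟨E - 1, by omega⟩
        have hm1' : ∀ b : Fin (k' + 2),
            1 ≤ (if b = j₀ then m (e b.succ) - 1 else m (e b.succ)) := by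
          intro b
          by_cases hb : b = j₀
          · rw [if_pos hb, hb]; omega
          · rw [if_neg hb]; exact h1 _
        have hle' : ∀ b : Fin (k' + 2),
            (if b = j₀ then m (e b.succ) - 1 else m (e b.succ)) ≤ E' := by
          intro b
          by_cases hb : b = j₀
          · rw [if_pos hb, hb]; have := hle (e j₀.succ); omega
          · rw [if_neg hb]; have := hother b hb; omega
        have hone : ∑ b : Fin (k' + 2), (if b = j₀ then 1 else 0) = 1 := by
          simp [Finset.sum_ite_eq']
        have hpt : ∀ b : Fin (k' + 2),
            (if b = j₀ then m (e b.succ) - 1 else m (e b.succ)) + (if b = j₀ then 1 else 0)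
              = m (e b.succ) := by
          intro b
          by_cases hb : b = j₀
          · rw [if_pos hb, if_pos hb, hb]; omega
          · rw [if_neg hb, if_neg hb]; omega
        have hsum' : ∑ b : Fin (k' + 2),
            (if b = j₀ then m (e b.succ) - 1 else m (e b.succ)) = 2 * E' := by
          have hsum3 : ∑ b : Fin (k' + 2),
              ((if b = j₀ then m (e b.succ) - 1 else m (e b.succ)) + (if b = j₀ then 1 else 0))
                = 2 * (E' + 1) - 1 := by
            rw [Finset.sum_congr rfl (fun b _ => hpt b)]; exact hsumsucc
          rw [Finset.sum_add_distrib, hone] at hsum3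
          omega
        have hrec := ih k' E' (by omega)
          (fun b => if b = j₀ then m (e b.succ) - 1 else m (e b.succ))
          hm1' hle' hsum' (by omega)
        have hfin := realize_addLeaf _ j₀ hrec
        obtain ⟨w, hmg, ⟨hd0, hds⟩, hcw⟩ := hfin
        refine ⟨w, hmg, ?_, hcw⟩
        intro x
        induction x using Fin.cases with
        | zero => rw [hd0, hm20]
        | succ b =>
          rw [hds b]
          exact hpt b
      · -- Branch A : remove an edge between two big vertices
        push_neg at hleaf
        have h2 : ∀ x, 2 ≤ m x := fun x => by have := h1 x; have := hleaf x; omega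
        obtain ⟨i, -, hi⟩ := Finset.exists_max_image Finset.univ m ⟨0, Finset.mem_univ 0⟩
        simp only [Finset.mem_univ, true_implies] at hi
        obtain ⟨x0, hx0⟩ := Fintype.exists_ne_of_one_lt_card (by simp) i
        obtain ⟨j, hjmem, hj⟩ := Finset.exists_max_image (Finset.univ.erase i) m
          ⟨x0, Finset.mem_erase.mpr ⟨hx0, Finset.mem_univ x0⟩⟩
        have hji : j ≠ i := (Finset.mem_erase.mp hjmem).1
        have hij : i ≠ j := Ne.symm hji
        have hnE : k' + 3 ≤ E := by
          have hcard : (k' + 3) * 2 ≤ ∑ x, m x := by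
            have := Finset.card_nsmul_le_sum Finset.univ m 2 (fun x _ => h2 x)
            simpa using this
          omega
        have hcov : ∀ x, m x = E → x = i ∨ x = j := by
          intro x hx
          by_contra hc
          push_neg at hc
          have hxi : m i = E := le_antisymm (hle i) (hx ▸ hi x)
          have hxj : m j = E := le_antisymm (hle j)
            (hx ▸ hj x (Finset.mem_erase.mpr ⟨hc.1, Finset.mem_univ x⟩))
          have htr := triple_le m (i := x) (j := i) (k := j) hc.1 hc.2 hij
          have := h2 i
          omega
        obtain ⟨E', rfl⟩ : ∃ E', E = E' + 1 := ⟨E - 1, by omega⟩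
        have hindsum : ∑ x : Fin (k' + 3),
            ((if x = i then 1 else 0) + (if x = j then 1 else 0)) = 2 := by
          rw [Finset.sum_add_distrib]
          simp [Finset.sum_ite_eq']
        have hpt : ∀ x, (m x - ((if x = i then 1 else 0) + (if x = j then 1 else 0)))
            + ((if x = i then 1 else 0) + (if x = j then 1 else 0)) = m x := by
          intro x
          have := h2 x
          by_cases hxi : x = i
          · subst hxi; rw [if_pos rfl, if_neg hij]; omega
          · by_cases hxj : x = j
            · subst hxj; rw [if_neg hxi, if_pos rfl]; omega
            · rw [if_neg hxi, if_neg hxj]; omega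
        have hm1' : ∀ x : Fin (k' + 3),
            1 ≤ m x - ((if x = i then 1 else 0) + (if x = j then 1 else 0)) := by
          intro x
          have := h2 x
          by_cases hxi : x = i
          · subst hxi; rw [if_pos rfl, if_neg hij]; omega
          · by_cases hxj : x = j
            · subst hxj; rw [if_neg hxi, if_pos rfl]; omega
            · rw [if_neg hxi, if_neg hxj]; omega
        have hle' : ∀ x : Fin (k' + 3),
            m x - ((if x = i then 1 else 0) + (if x = j then 1 else 0)) ≤ E' := by
          intro x
          by_cases hxE : m x = E' + 1
          · rcases hcov x hxE with h | h
            · subst h; rw [if_pos rfl, if_neg hij]; omega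
            · subst h; rw [if_neg hji, if_pos rfl]; omega
          · have := hle x
            omega
        have hsum' : ∑ x : Fin (k' + 3),
            (m x - ((if x = i then 1 else 0) + (if x = j then 1 else 0))) = 2 * E' := by
          have hs3 : ∑ x, ((m x - ((if x = i then 1 else 0) + (if x = j then 1 else 0)))
              + ((if x = i then 1 else 0) + (if x = j then 1 else 0))) = 2 * (E' + 1) := by
            rw [Finset.sum_congr rfl (fun x _ => hpt x)]; exact hsum
          have hsplit : ∑ x : Fin (k' + 3), ((m x - ((if x = i then 1 else 0) + (if x = j then 1 else 0)))
              + ((if x = i then 1 else 0) + (if x = j then 1 else 0)))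
              = (∑ x : Fin (k' + 3), (m x - ((if x = i then 1 else 0) + (if x = j then 1 else 0))))
                + ∑ x : Fin (k' + 3), ((if x = i then 1 else 0) + (if x = j then 1 else 0)) :=
            Finset.sum_add_distrib
          rw [hsplit, hindsum] at hs3
          omega
        have hrec := ih (k' + 1) E' (by omega)
          (fun x => m x - ((if x = i then 1 else 0) + (if x = j then 1 else 0)))
          hm1' hle' hsum' (by omega)
        have hfin := realize_addEdge _ hij hrec
        obtain ⟨w, hmg, hdw, hcw⟩ := hfin
        refine ⟨w, hmg, ?_, hcw⟩
        intro x
        rw [hdw x]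
        exact hpt x

/-- Fix `d ≥ 3`.  Any partition `2d - 2 = m₁ + … + m_n` with `n ≤ d` and
`1 ≤ mᵢ ≤ d - 1` arises as the degree sequence of a connected loopless multigraph
on `n` vertices. -/
theorem partition_realizable_by_connected_multigraph
    (d n : ℕ) (hd : 3 ≤ d) (hn : n ≤ d) (m : Fin n → ℕ)
    (hm : ∀ i, 1 ≤ m i ∧ m i ≤ d - 1)
    (hsum : ∑ i, m i = 2 * d - 2) :
    ∃ w : Fin n → Fin n → ℕ,
      IsMultigraph w ∧ (∀ i, mdeg w i = m i) ∧ (mSimple w).Connected := by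
  match n, hn with
  | 0, _ =>
    exfalso
    rw [Fin.sum_univ_zero] at hsum
    omega
  | 1, _ =>
    exfalso
    rw [Fin.sum_univ_one] at hsum
    have := (hm 0).2
    omega
  | (k + 2), hn =>
    exact main_lemma (k + (d - 1)) k (d - 1) le_rfl m (fun i => (hm i).1) (fun i => (hm i).2)
      (by omega) (by omega)
end

section
/- Let G be a connected loopless multigraph on n ≥ 3 vertices whose degree sequence realizes a partition of 2d - 2 with all parts between 1 and d - 1. Then for any two adjacent vertices v₁, v₂ with the simple-graph degree of v₁ at least 2, there exists a connected loopless multigraph G' on the same vertex set whose degree sequence agrees with that of G except that the degree of v₁ is decreased by 1 and the degree of v₂ is increased by 1. -/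
open scoped BigOperators

/-- The simple-graph degree of `i`: the number of distinct neighbors of `i`. -/
def sdeg {n : ℕ} (w : Fin n → Fin n → ℕ) (i : Fin n) : ℕ :=
  (Finset.univ.filter fun j => 0 < w i j).card

lemma reachable_transfer {V : Type*} {G G' : SimpleGraph V}
    (h : ∀ a b, G.Adj a b → G'.Reachable a b) {a b : V} (hr : G.Reachable a b) :
    G'.Reachable a b := by
  obtain ⟨p⟩ := hr
  induction p with
  | nil => exact SimpleGraph.Reachable.refl _
  | cons hadj _ ih => exact (h _ _ hadj).trans ih

/-- Let `G` be a connected loopless multigraph on `n ≥ 3` vertices whose degree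
sequence realizes a partition of `2d - 2` with all parts between `1` and `d - 1`.
For any adjacent vertices `v₁, v₂` with the simple-graph degree of `v₁` at least 2,
there is a connected loopless multigraph `G'` on the same vertex set whose degree
sequence agrees with that of `G` except that the degree of `v₁` drops by 1 and the
degree of `v₂` rises by 1. -/
theorem degree_shift_lemma
    (d n : ℕ) (hd : 3 ≤ d) (hn : 3 ≤ n)
    (w : Fin n → Fin n → ℕ) (hw : IsMultigraph w)
    (hconn : (mSimple w).Connected)
    (hparts : ∀ i, 1 ≤ mdeg w i ∧ mdeg w i ≤ d - 1)
    (hsum : ∑ i, mdeg w i = 2 * d - 2)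
    (v₁ v₂ : Fin n) (hadj : 0 < w v₁ v₂)
    (hsdeg : 2 ≤ sdeg w v₁) :
    ∃ w' : Fin n → Fin n → ℕ,
      IsMultigraph w' ∧ (mSimple w').Connected ∧
      (∀ v, v ≠ v₁ → v ≠ v₂ → mdeg w' v = mdeg w v) ∧
      mdeg w' v₁ + 1 = mdeg w v₁ ∧
      mdeg w' v₂ = mdeg w v₂ + 1 := by
  obtain ⟨hsymm, hdiag⟩ := hw
  have hv12 : v₁ ≠ v₂ := by rintro rfl; simp [hdiag] at hadj
  obtain ⟨u, hu_mem, hu_ne2⟩ :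
      ∃ u ∈ Finset.univ.filter (fun j => 0 < w v₁ j), u ≠ v₂ :=
    Finset.exists_mem_ne (by unfold sdeg at hsdeg; omega) v₂
  have hu_pos : 0 < w v₁ u := (Finset.mem_filter.mp hu_mem).2
  have hu_ne1 : u ≠ v₁ := by rintro rfl; simp [hdiag] at hu_pos
  set w' : Fin n → Fin n → ℕ := fun i j =>
    if (i = v₁ ∧ j = u) ∨ (i = u ∧ j = v₁) then w i j - 1
    else if (i = u ∧ j = v₂) ∨ (i = v₂ ∧ j = u) then w i j + 1
    else w i j with hw'def
  have hmg : IsMultigraph w' := by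
    constructor
    · intro i j
      have := hsymm i j
      simp only [hw'def]
      split_ifs <;> first | omega | aesop
    · intro i
      have := hdiag i
      simp only [hw'def]
      split_ifs <;> first | rfl | omega | aesop
  have hW12 : w' v₁ v₂ = w v₁ v₂ := by
    simp only [hw'def]
    split_ifs <;> first | rfl | omega | aesop
  have hWu2 : w' u v₂ = w u v₂ + 1 := by
    simp only [hw'def]
    split_ifs <;> first | rfl | omega | aesop
  have hconn' : (mSimple w').Connected := by
    have hne : Nonempty (Fin n) := ⟨⟨0, by omega⟩⟩
    have adj12 : (mSimple w').Adj v₁ v₂ := by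
      simp only [mSimple, SimpleGraph.fromRel_adj]
      exact ⟨hv12, Or.inl (hW12 ▸ hadj)⟩
    have adju2 : (mSimple w').Adj u v₂ := by
      simp only [mSimple, SimpleGraph.fromRel_adj]
      exact ⟨hu_ne2, Or.inl (by omega)⟩
    have step : ∀ a b, (mSimple w).Adj a b → (mSimple w').Reachable a b := by
      intro a b hab
      simp only [mSimple, SimpleGraph.fromRel_adj] at hab
      obtain ⟨hne', hpos⟩ := hab
      have hpos : 0 < w a b := by
        rcases hpos with h | h
        · exact h
        · rwa [hsymm a b]
      by_cases hcase : (a = v₁ ∧ b = u) ∨ (a = u ∧ b = v₁)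
      · rcases hcase with ⟨rfl, rfl⟩ | ⟨rfl, rfl⟩
        · exact adj12.reachable.trans adju2.symm.reachable
        · exact adju2.reachable.trans adj12.symm.reachable
      · refine SimpleGraph.Adj.reachable ?_
        simp only [mSimple, SimpleGraph.fromRel_adj]
        refine ⟨hne', Or.inl ?_⟩
        simp only [hw'def]
        split_ifs <;> omega
    exact ⟨fun a b => reachable_transfer step (hconn.preconnected a b)⟩
  have hv1u : v₁ ≠ u := fun h => hu_ne1 h.symm
  refine ⟨w', hmg, hconn', ?_, ?_, ?_⟩
  · intro v hv1 hv2
    by_cases hvu : v = u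
    · subst hvu
      have h2mem : v₂ ∈ Finset.univ.erase v₁ := by simp [Ne.symm hv12]
      have hpos' : 0 < w v v₁ := by rwa [hsymm v v₁]
      unfold mdeg
      rw [← Finset.add_sum_erase _ _ (Finset.mem_univ v₁),
          ← Finset.add_sum_erase _ _ (Finset.mem_univ v₁),
          ← Finset.add_sum_erase _ _ h2mem, ← Finset.add_sum_erase _ _ h2mem]
      have e1 : w' v v₁ = w v v₁ - 1 := by simp only [hw'def]; split_ifs <;> first | rfl | omega | aesop
      have e2 : w' v v₂ = w v v₂ + 1 := by simp only [hw'def]; split_ifs <;> first | rfl | omega | aesop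
      have e3 : ∀ j ∈ (Finset.univ.erase v₁).erase v₂, w' v j = w v j := by
        intro j hj
        simp only [Finset.mem_erase] at hj
        simp only [hw'def]
        split_ifs <;> first | rfl | omega | aesop
      have hs : ∑ j ∈ (Finset.univ.erase v₁).erase v₂, w' v j
          = ∑ j ∈ (Finset.univ.erase v₁).erase v₂, w v j := Finset.sum_congr rfl e3
      rw [hs, e1, e2]
      omega
    · unfold mdeg
      refine Finset.sum_congr rfl fun j _ => ?_
      simp only [hw'def]
      split_ifs <;> first | rfl | omega | aesop
  · unfold mdeg
    rw [← Finset.add_sum_erase _ _ (Finset.mem_univ u),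
        ← Finset.add_sum_erase _ _ (Finset.mem_univ u)]
    have e1 : w' v₁ u = w v₁ u - 1 := by simp only [hw'def]; split_ifs <;> first | rfl | omega | aesop
    have hs : ∑ j ∈ Finset.univ.erase u, w' v₁ j = ∑ j ∈ Finset.univ.erase u, w v₁ j := by
      refine Finset.sum_congr rfl fun j hj => ?_
      simp only [Finset.mem_erase] at hj
      simp only [hw'def]
      split_ifs <;> first | rfl | omega | aesop
    rw [hs, e1]
    omega
  · unfold mdeg
    rw [← Finset.add_sum_erase _ _ (Finset.mem_univ u),
        ← Finset.add_sum_erase _ _ (Finset.mem_univ u)]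
    have e1 : w' v₂ u = w v₂ u + 1 := by simp only [hw'def]; split_ifs <;> first | rfl | omega | aesop
    have hs : ∑ j ∈ Finset.univ.erase u, w' v₂ j = ∑ j ∈ Finset.univ.erase u, w v₂ j := by
      refine Finset.sum_congr rfl fun j hj => ?_
      simp only [Finset.mem_erase] at hj
      simp only [hw'def]
      split_ifs <;> first | rfl | omega | aesop
    rw [hs, e1]
    omega
end

section
/- If a branch datum of degree d consists of partitions of d each of the form [k, 1, 1, …, 1] (a single part k ≥ 2 and the rest ones), and the Riemann–Hurwitz condition Σᵢ(kᵢ - 1) = 2d - 2 holds with kᵢ ≤ d for all i and at most d parts exceeding 1, then there exists an n-tuple of permutations (σ₁, …, σ_n) in S_d such that each σᵢ is a single kᵢ-cycle, σ₁·σ₂·…·σ_n = id, and ⟨σ₁, …, σ_n⟩ is transitive on {1, …, d}. -/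
open scoped BigOperators

namespace PureCycleHurwitzAux

open List Equiv Equiv.Perm

variable {α : Type*} [DecidableEq α]

/-- Chaining lemma: formPerm of lists sharing an endpoint multiply. Holds for arbitrary lists. -/
theorem formPerm_chain (A : List α) (x : α) (B : List α) :
    (A ++ x :: B).formPerm = (A ++ [x]).formPerm * (x :: B).formPerm := by
  induction A with
  | nil => simp
  | cons a A ih =>
    cases A with
    | nil => simp [List.formPerm_cons_cons]
    | cons b A' =>
      have h1 : (a :: b :: A') ++ x :: B = a :: b :: (A' ++ x :: B) := by simp
      have h2 : (a :: b :: A') ++ [x] = a :: b :: (A' ++ [x]) := by simp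
      rw [h1, h2, List.formPerm_cons_cons, List.formPerm_cons_cons]
      have ih' : (b :: (A' ++ x :: B)).formPerm
          = (b :: (A' ++ [x])).formPerm * (x :: B).formPerm := by
        simpa using ih
      rw [ih', mul_assoc]

theorem getElem_map_range' (f : ℕ → α) (s n i : ℕ) (h : i < ((List.range' s n).map f).length) :
    ((List.range' s n).map f)[i] = f (s + i) := by
  have hi : i < (List.range' s n).length := by simpa using h
  rw [List.getElem_map]
  congr 1
  simpa using List.getElem_range' (step := 1) i hi

theorem range'_append' (s m n : ℕ) :
    List.range' s m ++ List.range' (s+m) n = List.range' s (m+n) := by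
  simpa [Nat.add_comm n m] using List.range'_append (step := 1) (s := s) (m := m) (n := n)

theorem range'_concat' (s n : ℕ) : List.range' s (n+1) = List.range' s n ++ [s+n] := by
  simpa using List.range'_concat (step := 1) (s := s) (n := n)

theorem range'_succ' (s n : ℕ) : List.range' s (n+1) = s :: List.range' (s+1) n :=
  List.range'_succ (s := s) (n := n) (step := 1)

/-- Chaining for `formPerm` of mapped ranges. -/
theorem formPerm_chain_range (f : ℕ → α) (a l1 l2 : ℕ) :
    ((List.range' a (l1+1+l2)).map f).formPerm
      = ((List.range' a (l1+1)).map f).formPerm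
        * ((List.range' (a+l1) (l2+1)).map f).formPerm := by
  have h1 : List.range' a (l1+1+l2) = List.range' a l1 ++ (a+l1) :: List.range' (a+l1+1) l2 := by
    rw [show l1+1+l2 = l1+(1+l2) by omega, ← range'_append' a l1 (1+l2),
      show 1+l2 = l2+1 by omega, range'_succ']
  have h2 : List.range' a (l1+1) = List.range' a l1 ++ [a+l1] := range'_concat' a l1
  have h3 : List.range' (a+l1) (l2+1) = (a+l1) :: List.range' (a+l1+1) l2 := range'_succ' _ _
  rw [h1, h2, h3, List.map_append, List.map_cons, List.map_append, List.map_cons, List.map_nil]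
  exact formPerm_chain _ _ _

/-- The walk function: ascend `0..p`, descend to `j`, ascend the branch `p+1..d-1`,
then descend the branch and the spine back to `0`.  Here `S` is the position where the
branch top is reached. -/
def wFun (d p j S t : ℕ) : ℕ :=
  if t ≤ p then t
  else if t ≤ 2*p - j then 2*p - t
  else if t ≤ S then j + (t - p)
  else if t ≤ 2*d - 3 - j then (p - j) + (2*d - 2) - t
  else 2*d - 2 - t

theorem wFun_lt {d p j S : ℕ} (hd : 2 ≤ d) (hp : p ≤ d-1) (hj : j < p)
    (hS : S = p + (d-1-j)) (t : ℕ) : wFun d p j S t < d := by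
  unfold wFun; split_ifs <;> omega

theorem wFun_inj {d p j S : ℕ} (hd : 2 ≤ d) (hp : p ≤ d-1) (hj : j < p)
    (hS : S = p + (d-1-j)) {a b s t : ℕ}
    (hcase : b ≤ p ∨ (a = p ∧ b = S) ∨ (S ≤ a ∧ b ≤ 2*d - 2))
    (has : a ≤ s) (hsb : s ≤ b) (hat : a ≤ t) (htb : t ≤ b)
    (heq : wFun d p j S s = wFun d p j S t) : s = t := by
  unfold wFun at heq; split_ifs at heq <;> omega


/-- The full walk has trivial `formPerm`: explicit cancellation on the tripod. -/
theorem walk_one {d p j S : ℕ} (hd : 2 ≤ d) (hp : p ≤ d-1) (hj : j < p)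
    (hS : S = p + (d-1-j)) (f v : ℕ → Fin d)
    (hfv : ∀ t, (f t : ℕ) = wFun d p j S t) (hv : ∀ x, x < d → (v x : ℕ) = x) :
    ((List.range' 0 (2*d-1)).map f).formPerm = 1 := by
  have e1 : 2*d-1 = p + 1 + (2*d-2-p) := by omega
  rw [e1, formPerm_chain_range f 0 p (2*d-2-p), Nat.zero_add,
    show 2*d-2-p+1 = (p-j) + 1 + (2*d-2-(2*p-j)) by omega,
    formPerm_chain_range f p (p-j) _, show p+(p-j) = 2*p-j by omega,
    show 2*d-2-(2*p-j)+1 = (d-1-p) + 1 + (2*d-2-S) by omega,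
    formPerm_chain_range f (2*p-j) (d-1-p) _, show 2*p-j+(d-1-p) = S by omega]
  have hW1 : ((List.range' 0 (p+1)).map f).formPerm
      = ((List.range' 0 (j+1)).map v).formPerm * ((List.range' j (p-j+1)).map v).formPerm := by
    have h0 : (List.range' 0 (p+1)).map f = (List.range' 0 (p+1)).map v := by
      apply List.map_congr_left
      intro x hx
      have hx' : x < p + 1 := by
        have := (List.mem_range'_1.mp hx).2; omega
      apply Fin.ext
      rw [hfv, hv x (by omega)]
      unfold wFun; split_ifs <;> omega
    rw [h0, show p+1 = j+1+(p-j) by omega, formPerm_chain_range v 0 j (p-j), Nat.zero_add]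
  have hW2 : (List.range' p (p-j+1)).map f = ((List.range' j (p-j+1)).map v).reverse := by
    refine List.ext_getElem ?_ ?_
    · simp only [List.length_map, List.length_range', List.length_reverse]
    · intro i h1 h2
      have hi : i < p-j+1 := by simpa using h1
      rw [getElem_map_range', List.getElem_reverse]
      simp only [List.length_map, List.length_range']
      rw [getElem_map_range']
      apply Fin.ext
      rw [hfv, hv _ (by omega)]
      unfold wFun; split_ifs <;> omega
  have hW3 : (List.range' (2*p-j) (d-1-p+1)).map f
      = v j :: (List.range' (p+1) (d-1-p)).map v := by
    refine List.ext_getElem ?_ ?_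
    · simp only [List.length_map, List.length_range', List.length_cons]
    · intro i h1 h2
      have hi : i < d-1-p+1 := by simpa using h1
      rw [getElem_map_range']
      rcases i with _ | i
      · rw [List.getElem_cons_zero]
        apply Fin.ext
        rw [hfv, hv _ (by omega)]
        unfold wFun; split_ifs <;> omega
      · rw [List.getElem_cons_succ, getElem_map_range']
        apply Fin.ext
        rw [hfv, hv _ (by omega)]
        unfold wFun; split_ifs <;> omega
  have hW4 : (List.range' S (2*d-2-S+1)).map f
      = (((List.range' 0 (j+1)).map v) ++ (List.range' (p+1) (d-1-p)).map v).reverse := by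
    refine List.ext_getElem ?_ ?_
    · simp only [List.length_map, List.length_range', List.length_reverse, List.length_append]
      omega
    · intro i h1 h2
      have hi : i < 2*d-2-S+1 := by simpa using h1
      rw [getElem_map_range', List.getElem_reverse]
      simp only [List.length_map, List.length_range', List.length_append]
      by_cases hq : (j+1) + (d-1-p) - 1 - i < j+1
      · rw [List.getElem_append_left (by simpa using hq)]
        rw [getElem_map_range']
        apply Fin.ext
        rw [hfv, hv _ (by omega)]
        unfold wFun; split_ifs <;> omega
      · rw [List.getElem_append_right (by simp only [List.length_map, List.length_range']; omega)]
        simp only [List.length_map, List.length_range']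
        rw [getElem_map_range']
        apply Fin.ext
        rw [hfv, hv _ (by omega)]
        unfold wFun; split_ifs <;> omega
  have hfpA1X : (((List.range' 0 (j+1)).map v) ++ (List.range' (p+1) (d-1-p)).map v).formPerm
      = ((List.range' 0 (j+1)).map v).formPerm
        * (v j :: (List.range' (p+1) (d-1-p)).map v).formPerm := by
    have h : ((List.range' 0 (j+1)).map v) ++ (List.range' (p+1) (d-1-p)).map v
        = ((List.range' 0 j).map v) ++ (v j) :: (List.range' (p+1) (d-1-p)).map v := by
      rw [range'_concat' 0 j, List.map_append, Nat.zero_add]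
      simp
    rw [h, formPerm_chain]
    congr 2
    rw [range'_concat' 0 j, List.map_append, Nat.zero_add]
    simp
  rw [hW1, hW2, hW3, hW4, List.formPerm_reverse, List.formPerm_reverse, hfpA1X]
  group

/-- Telescoping: the ordered product of window cycles is the `formPerm` of the full walk. -/
theorem telescope (f : ℕ → α) {n : ℕ} (E : ℕ → ℕ) (σ : Fin n → Equiv.Perm α)
    (hstep : ∀ i, i < n → E i < E (i+1))
    (hσ : ∀ (i : ℕ) (h : i < n),
      σ ⟨i,h⟩ = ((List.range' (E i) (E (i+1) - E i + 1)).map f).formPerm) :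
    ((List.range' (E 0) (E n - E 0 + 1)).map f).formPerm = (List.ofFn σ).prod := by
  have hmono : ∀ a b, a ≤ b → b ≤ n → E a ≤ E b := by
    intro a b hab
    induction hab with
    | refl => intro _; exact le_rfl
    | @step b' h ih =>
      intro hbn
      exact le_trans (ih (by omega)) (le_of_lt (hstep b' (by omega)))
  suffices aux : ∀ c i, i + c = n →
      ((List.range' (E i) (E n - E i + 1)).map f).formPerm = ((List.ofFn σ).drop i).prod by
    simpa using aux n 0 (by omega)
  intro c
  induction c with
  | zero =>
    intro i hi
    have h : i = n := by omega
    subst h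
    rw [Nat.sub_self, List.drop_of_length_le (by simp)]
    simp
  | succ c IH =>
    intro i hin
    have hi : i < n := by omega
    have h1 := hstep i hi
    have h2 := hmono (i+1) n (by omega) le_rfl
    rw [show E n - E i + 1 = (E (i+1) - E i) + 1 + (E n - E (i+1)) by omega,
      formPerm_chain_range f (E i) _ _,
      show E i + (E (i+1) - E i) = E (i+1) by omega,
      ← hσ i hi, IH (i+1) (by omega)]
    conv_rhs => rw [List.drop_eq_getElem_cons (show i < (List.ofFn σ).length by simpa using hi)]
    rw [List.prod_cons]
    congr 1
    simp

end PureCycleHurwitzAux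

set_option maxHeartbeats 1000000 in
/-- Pure-cycle Hurwitz factorizations exist: if a degree-`d` branch datum consists of
`n` partitions each of the form `[kᵢ, 1, …, 1]` with `2 ≤ kᵢ ≤ d`, satisfying
Riemann–Hurwitz `∑ (kᵢ - 1) = 2d - 2`, and `n ≤ d`, then there are permutations
`σ₁, …, σ_n` in `S_d`, each `σᵢ` a single `kᵢ`-cycle, whose product (in order) is the
identity and which generate a transitive subgroup of `S_d`. -/
theorem pure_cycle_hurwitz_factorization_exists
    (d n : ℕ) (hd : 2 ≤ d) (hn : n ≤ d) (k : Fin n → ℕ)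
    (hk : ∀ i, 2 ≤ k i ∧ k i ≤ d)
    (hRH : ∑ i, (k i - 1) = 2 * d - 2) :
    ∃ σ : Fin n → Equiv.Perm (Fin d),
      (∀ i, (σ i).cycleType = {k i}) ∧
      (List.ofFn σ).prod = 1 ∧
      (∀ x y : Fin d, ∃ g ∈ Subgroup.closure (Set.range σ), g x = y) := by
  classical
  open PureCycleHurwitzAux in
  have hd0 : 0 < d := by omega
  -- extend k to ℕ
  set kk : ℕ → ℕ := fun t => if h : t < n then k ⟨t, h⟩ else 2 with hkk
  have hkkv : ∀ {i : ℕ} (h : i < n), kk i = k ⟨i, h⟩ := fun {i} h => dif_pos h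
  have hkkb : ∀ i, i < n → 2 ≤ kk i ∧ kk i ≤ d := by
    intro i h; rw [hkkv h]; exact hk ⟨i, h⟩
  set E : ℕ → ℕ := fun i => ∑ t ∈ Finset.range i, (kk t - 1) with hE
  have hE0 : E 0 = 0 := by simp [hE]
  have hEsucc : ∀ i, E (i+1) = E i + (kk i - 1) := by
    intro i; rw [hE]; exact Finset.sum_range_succ _ i
  have hEn : E n = 2*d - 2 := by
    show (∑ t ∈ Finset.range n, (kk t - 1)) = 2*d - 2
    rw [← Fin.sum_univ_eq_sum_range (fun t => kk t - 1) n]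
    rw [← hRH]
    apply Finset.sum_congr rfl
    intro i _
    rw [hkkv i.isLt]
  have hEstep : ∀ i, i < n → E i < E (i+1) := by
    intro i h; have := (hkkb i h).1; rw [hEsucc]; omega
  have hEmono : ∀ a b, a ≤ b → b ≤ n → E a ≤ E b := by
    intro a b hab
    induction hab with
    | refl => intro _; exact le_rfl
    | @step b' h ih =>
      intro hbn
      exact le_trans (ih (by omega)) (le_of_lt (hEstep b' (by omega)))
  have hn0 : 0 < n := by
    rcases Nat.eq_zero_or_pos n with h | h
    · exfalso; rw [h] at hEn; rw [hE0] at hEn; omega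
    · exact h
  -- the crossing window
  set m := Nat.findGreatest (fun i => E i ≤ d - 1) n with hm
  have hmle : E m ≤ d - 1 :=
    Nat.findGreatest_spec (P := fun i => E i ≤ d - 1) (Nat.zero_le n)
      (show E 0 ≤ d - 1 by omega)
  have hmn : m < n := by
    rcases lt_or_eq_of_le (Nat.findGreatest_le (P := fun i => E i ≤ d - 1) n) with h | h
    · exact h
    · exfalso; rw [hm] at hmle; rw [h, hEn] at hmle; omega
  have hm1 : ¬ (E (m+1) ≤ d - 1) :=
    Nat.findGreatest_is_greatest (P := fun i => E i ≤ d - 1) (n := n)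
      (Nat.lt_succ_self m) hmn
  set p := E m with hpdef
  set j := d - 1 - (kk m - 1) with hjdef
  have hemb := hkkb m hmn
  have hp : p ≤ d - 1 := hmle
  have hSval : E (m+1) = p + (d - 1 - j) := by rw [hEsucc]; omega
  set S := E (m+1) with hSdef
  have hj : j < p := by omega
  -- the walk as elements of `Fin d`
  set wf : ℕ → Fin d := fun t => ⟨wFun d p j S t % d, Nat.mod_lt _ hd0⟩ with hwfdef
  have hwf : ∀ t, (wf t : ℕ) = wFun d p j S t := by
    intro t; exact Nat.mod_eq_of_lt (wFun_lt hd hp hj hSval t)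
  set vv : ℕ → Fin d := fun x => ⟨x % d, Nat.mod_lt _ hd0⟩ with hvvdef
  have hvv : ∀ x, x < d → (vv x : ℕ) = x := fun x hx => Nat.mod_eq_of_lt hx
  -- the cycles
  set σ : Fin n → Equiv.Perm (Fin d) :=
    fun i => ((List.range' (E i) (k i)).map wf).formPerm with hσdef
  clear_value σ wf vv S j p m E kk
  -- windows are nodup
  have hwin : ∀ (i : ℕ) (hi : i < n), ((List.range' (E i) (kk i)).map wf).Nodup := by
    intro i hi
    apply List.Nodup.map_on ?_ (List.nodup_range' 1)
    intro x hx y hy hxy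
    have hx' := List.mem_range'_1.mp hx
    have hy' := List.mem_range'_1.mp hy
    have hkki := hkkb i hi
    have hEi1 : E (i+1) = E i + (kk i - 1) := hEsucc i
    have hval : wFun d p j S x = wFun d p j S y := by
      rw [← hwf, ← hwf, hxy]
    have hcase : E (i+1) ≤ p ∨ (E i = p ∧ E (i+1) = S) ∨ (S ≤ E i ∧ E (i+1) ≤ 2*d - 2) := by
      rcases lt_trichotomy i m with h | h | h
      · left; rw [hpdef]; exact hEmono (i+1) m (by omega) (by omega)
      · right; left; subst h; exact ⟨hpdef.symm, hSdef.symm⟩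
      · right; right
        refine ⟨?_, ?_⟩
        · rw [hSdef]; exact hEmono (m+1) i (by omega) (by omega)
        · rw [← hEn]; exact hEmono (i+1) n (by omega) le_rfl
    rcases lt_trichotomy x y with h | h | h
    · exact absurd (wFun_inj hd hp hj hSval hcase (by omega) (by omega) (by omega) (by omega) hval) (by omega)
    · exact h
    · exact absurd (wFun_inj hd hp hj hSval hcase (by omega) (by omega) (by omega) (by omega) hval).symm (by omega)
  have hwinlen : ∀ (i : ℕ) (hi : i < n), ((List.range' (E i) (kk i)).map wf).length = kk i := by
    intro i hi; simp
  -- cycle types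
  have hcyc : ∀ i : Fin n, (σ i).cycleType = {k i} := by
    intro i
    have hi : (i : ℕ) < n := i.isLt
    have hnd := hwin i hi
    have hlen := hwinlen i hi
    rw [hkkv hi, Fin.eta] at hnd hlen
    have h2 : 2 ≤ ((List.range' (E i) (k i)).map wf).length := by rw [hlen]; exact (hk i).1
    rw [hσdef]
    have := (List.isCycle_formPerm hnd h2).cycleType
    rw [this, List.support_formPerm_of_nodup _ hnd
      (by intro x hx; rw [hx] at h2; simp at h2), List.toFinset_card_of_nodup hnd, hlen]
  -- the product is 1
  have hprod : (List.ofFn σ).prod = 1 := by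
    have hσ' : ∀ (i : ℕ) (h : i < n),
        σ ⟨i,h⟩ = ((List.range' (E i) (E (i+1) - E i + 1)).map wf).formPerm := by
      intro i h
      have h2 : 2 ≤ kk i := (hkkb i h).1
      have harith : E (i+1) - E i + 1 = k ⟨i, h⟩ := by
        rw [hEsucc]
        rw [hkkv h] at h2 ⊢
        omega
      rw [harith, hσdef]
    have := telescope wf E σ hEstep hσ'
    rw [← this, hE0, hEn, Nat.sub_zero, show 2*d-2+1 = 2*d-1 by omega]
    exact walk_one hd hp hj hSval wf vv hwf hvv
  -- transitivity
  have hreach : ∀ t, t ≤ 2*d-2 → ∃ g ∈ Subgroup.closure (Set.range σ), g (wf t) = wf 0 := by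
    intro t
    induction t using Nat.strong_induction_on with
    | _ t IH =>
      intro ht
      rcases Nat.eq_zero_or_pos t with rfl | htpos
      · exact ⟨1, Subgroup.one_mem _, rfl⟩
      set i := Nat.findGreatest (fun i => E i < t) n with hidef
      have hispec : E i < t :=
        Nat.findGreatest_spec (P := fun i => E i < t) (Nat.zero_le n)
          (show E 0 < t by omega)
      have hile : i ≤ n := Nat.findGreatest_le n
      have hin : i < n := by
        rcases lt_or_eq_of_le hile with h | h
        · exact h
        · exfalso; have h2 : E n < t := h ▸ hispec; omega
      have hiup : t ≤ E (i+1) := by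
        have h2 : ¬ (E (i+1) < t) := Nat.findGreatest_is_greatest (P := fun i => E i < t)
          (n := n) (Nat.lt_succ_self i) hin
        omega
      -- the window list
      have hnd := hwin i hin
      have hlen := hwinlen i hin
      have hkki := hkkb i hin
      have hidx : t - E i < ((List.range' (E i) (kk i)).map wf).length := by
        rw [hlen]
        have := hEsucc i
        omega
      have h0idx : 0 < ((List.range' (E i) (kk i)).map wf).length := by rw [hlen]; omega
      have happ := List.formPerm_pow_apply_getElem _ hnd (kk i - (t - E i)) (t - E i) hidx
      have hEi1 := hEsucc i
      have hmodidx : ((List.range' (E i) (kk i)).map wf)[(t - E i + (kk i - (t - E i))) %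
          ((List.range' (E i) (kk i)).map wf).length]'(by
            apply Nat.mod_lt _ (by omega)) = ((List.range' (E i) (kk i)).map wf)[0]'h0idx := by
        congr 1
        rw [hlen, show t - E i + (kk i - (t - E i)) = kk i by omega, Nat.mod_self]
      have hL1 : ((List.range' (E i) (kk i)).map wf)[t - E i]'hidx = wf t := by
        rw [getElem_map_range']; congr 1; omega
      have hL0 : ((List.range' (E i) (kk i)).map wf)[0]'h0idx = wf (E i) := by
        rw [getElem_map_range', Nat.add_zero]
      rw [hmodidx, hL1, hL0] at happ
      have hperm : ((List.range' (E i) (kk i)).map wf).formPerm = σ ⟨i, hin⟩ := by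
        rw [hkkv hin, hσdef]
      rw [hperm] at happ
      obtain ⟨h, hmem, hh⟩ := IH (E i) hispec (by omega)
      refine ⟨h * (σ ⟨i, hin⟩ ^ (kk i - (t - E i))), ?_, ?_⟩
      · exact Subgroup.mul_mem _ hmem
          (Subgroup.pow_mem _ (Subgroup.subset_closure (Set.mem_range_self (f := σ) ⟨i, hin⟩)) _)
      · rw [Equiv.Perm.mul_apply, happ, hh]
  have hsurj : ∀ x : Fin d, ∃ t, t ≤ 2*d-2 ∧ wf t = x := by
    intro x
    have hx : (x : ℕ) < d := x.isLt
    by_cases hxp : (x : ℕ) ≤ p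
    · refine ⟨(x : ℕ), by omega, ?_⟩
      apply Fin.ext
      rw [hwf]
      unfold wFun; split_ifs <;> omega
    · refine ⟨(x : ℕ) + (p - j), by omega, ?_⟩
      apply Fin.ext
      rw [hwf]
      unfold wFun; split_ifs <;> omega
  refine ⟨σ, hcyc, hprod, ?_⟩
  intro x y
  obtain ⟨tx, htx, hwx⟩ := hsurj x
  obtain ⟨ty, hty, hwy⟩ := hsurj y
  obtain ⟨gx, hgxm, hgx⟩ := hreach tx htx
  obtain ⟨gy, hgym, hgy⟩ := hreach ty hty
  refine ⟨gy⁻¹ * gx, Subgroup.mul_mem _ (Subgroup.inv_mem _ hgym) hgxm, ?_⟩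
  rw [Equiv.Perm.mul_apply, ← hwx, hgx, ← hwy] at *
  rw [← hgy]
  simp
end

section
/- Let f be a rational map of degree d with a repelling fixed point at infinity and d distinct finite fixed critical points c₁, …, c_d, each of local degree 2. Then f equals the Newton's method map N_p(z) = z - p(z)/p'(z) for the polynomial p(z) = (z - c₁)⋯(z - c_d). -/
open Polynomial
open scoped BigOperators

lemma sq_dvd_of_double_root (R : Polynomial ℂ) (a : ℂ) (h0 : R.eval a = 0)
    (h1 : (derivative R).eval a = 0) : (X - C a)^2 ∣ R := by
  obtain ⟨S, hS⟩ := (dvd_iff_isRoot.mpr h0 : (X - C a) ∣ R)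
  have hda : S.eval a = 0 := by
    have h := h1
    rw [hS, derivative_mul, derivative_sub, derivative_X, derivative_C] at h
    simpa using h
  obtain ⟨T, hT⟩ := (dvd_iff_isRoot.mpr hda : (X - C a) ∣ S)
  exact ⟨T, by rw [hS, hT]; ring⟩

/-- Let `f = P/Q` (in lowest terms) be a rational map of degree `d` with a repelling
fixed point at infinity (`deg P = deg Q + 1` with multiplier `Q.leadingCoeff /
P.leadingCoeff` of norm `> 1`) and `d` distinct finite fixed critical points
`c₁, …, c_d` (each of local degree 2, so `f(cᵢ) = cᵢ` and `f'(cᵢ) = 0`).  Then `f`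
equals the Newton's method map `N_p(z) = z - p(z)/p'(z)` of
`p(z) = (z - c₁)⋯(z - c_d)` wherever both are defined. -/
theorem critically_fixed_is_newton_method
    (d : ℕ) (hd : 2 ≤ d)
    (P Q : Polynomial ℂ) (hQ : Q ≠ 0) (hcop : IsCoprime P Q)
    (hPdeg : P.natDegree = d) (hQdeg : Q.natDegree + 1 = P.natDegree)
    (hrepelling : 1 < ‖Q.leadingCoeff / P.leadingCoeff‖)
    (c : Fin d → ℂ) (hinj : Function.Injective c)
    (hfin : ∀ i, Q.eval (c i) ≠ 0)
    (hfix : ∀ i, P.eval (c i) / Q.eval (c i) = c i)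
    (hcrit : ∀ i, deriv (fun z => P.eval z / Q.eval z) (c i) = 0) :
    ∀ z : ℂ, Q.eval z ≠ 0 →
      (Polynomial.derivative (∏ i, (X - C (c i)))).eval z ≠ 0 →
      P.eval z / Q.eval z =
        z - (∏ i, (X - C (c i))).eval z /
          (Polynomial.derivative (∏ i, (X - C (c i)))).eval z := by
  set p : Polynomial ℂ := ∏ i, (X - C (c i)) with hp
  set A : Polynomial ℂ := X * derivative p - p with hA
  set R : Polynomial ℂ := P * derivative p - Q * A with hR
  have hpmonic : p.Monic := monic_prod_of_monic _ _ fun i _ => monic_X_sub_C _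
  have hpdeg : p.natDegree = d := by
    rw [hp, natDegree_prod _ _ fun i _ => X_sub_C_ne_zero (c i)]
    simp
  -- double root at each c i
  have hdvd : ∀ i : Fin d, (X - C (c i))^2 ∣ R := by
    intro i
    set a := c i with ha
    have hQa := hfin i
    have hfix' : P.eval a = a * Q.eval a := by
      have := hfix i
      field_simp at this
      linear_combination this
    have hpa : p.eval a = 0 := by
      rw [hp, eval_prod]
      exact Finset.prod_eq_zero (Finset.mem_univ i) (by simp [ha])
    have hcrit' : (derivative P).eval a * Q.eval a - P.eval a * (derivative Q).eval a = 0 := by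
      have h := hcrit i
      rw [show (fun z => P.eval z / Q.eval z) = (fun x => eval x P) / (fun x => eval x Q) from rfl,
        deriv_div (Polynomial.differentiableAt P) (Polynomial.differentiableAt Q) hQa] at h
      simp only [Polynomial.deriv] at h
      have h2 := (div_eq_zero_iff.mp h).resolve_right (pow_ne_zero 2 hQa)
      exact h2
    have hd' : (derivative P).eval a = a * (derivative Q).eval a := by
      have : (derivative P).eval a * Q.eval a = (a * (derivative Q).eval a) * Q.eval a := by
        linear_combination hcrit' + (derivative Q).eval a * hfix'
      exact mul_right_cancel₀ hQa this
    apply sq_dvd_of_double_root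
    · simp only [hR, hA, eval_sub, eval_mul, eval_X]
      linear_combination (derivative p).eval a * hfix' + Q.eval a * hpa
    · simp only [hR, hA, derivative_sub, derivative_mul, derivative_X, eval_sub, eval_add,
        eval_mul, eval_X, one_mul]
      linear_combination (derivative p).eval a * hd' +
        (derivative (derivative p)).eval a * hfix' + (derivative Q).eval a * hpa
  have hp2dvd : p ^ 2 ∣ R := by
    have h := Fintype.prod_dvd_of_coprime
      (s := fun i : Fin d => (X - C (c i))^2)
      (fun i j hij => ((Polynomial.pairwise_coprime_X_sub_C hinj) hij).pow) hdvd
    simpa [hp, Finset.prod_pow] using h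
  have hRzero : R = 0 := by
    by_contra hne
    have hle : (p ^ 2).natDegree ≤ R.natDegree := natDegree_le_of_dvd hp2dvd hne
    have hQd : Q.natDegree = d - 1 := by omega
    have hdp : (derivative p).natDegree ≤ d - 1 := by
      simpa [hpdeg] using natDegree_derivative_le p
    have h1 : (P * derivative p).natDegree ≤ d + (d - 1) :=
      le_trans (natDegree_mul_le) (add_le_add hPdeg.le hdp)
    have hXdp : (X * derivative p).natDegree ≤ d := by
      refine le_trans natDegree_mul_le ?_
      simp only [natDegree_X]
      omega
    have hAdeg : A.natDegree ≤ d := by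
      refine le_trans (natDegree_sub_le _ _) ?_
      simp [hXdp, hpdeg.le]
    have h2 : (Q * A).natDegree ≤ (d - 1) + d :=
      le_trans (natDegree_mul_le) (add_le_add hQd.le hAdeg)
    have hRdeg : R.natDegree ≤ 2 * d - 1 := by
      refine le_trans (natDegree_sub_le _ _) ?_
      rw [max_le_iff]
      omega
    have hp2deg : (p ^ 2).natDegree = 2 * d := by
      rw [natDegree_pow, hpdeg]
    omega
  have key : P * derivative p = Q * A := by
    have := sub_eq_zero.mp hRzero
    exact this
  intro z hz hpz
  have keyz : P.eval z * (derivative p).eval z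
      = Q.eval z * (z * (derivative p).eval z - p.eval z) := by
    have := congrArg (eval z) key
    simpa [hA, eval_mul, eval_sub] using this
  field_simp
  linear_combination keyz
end
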